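/- Consider the two-layer minimalist model trained with gradient flow, with dataset difficulty Q > 0: let θ(t) satisfy dθ/dt = −∇L(θ(t)) for t ≥ 0, and assume θ(t) converges as t → ∞ to a limit θ(∞) with L(θ(∞)) = 0. Then the sharpness at convergence satisfies (1/N)·[σ₁²(v₁^∞)² + d₁²/(v₁^∞)²] ≤ S(θ(∞)) ≤ (1/N)·[σ₁²(v₁^∞)² + (Σ_{i=1}^r d_i²)/(v₁^∞)²], where (v₁^∞)² = (√(C(θ(0))² + 4Q) − C(θ(0)))/2 is determined by the layer imbalance at initialization. -/

import Mathlib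

open scoped BigOperators

noncomputable def sharpness {E : Type*} [NormedAddCommGroup E] [NormedSpace ℝ E]
    (L : E → ℝ) (θ : E) : ℝ :=
  sSup {c : ℝ | ∃ ξ : E, ‖ξ‖ = 1 ∧ fderiv ℝ (fderiv ℝ L) θ ξ ξ = c}

open ContinuousLinearMap

set_option maxHeartbeats 2000000

section Aux
variable {E : Type*} [NormedAddCommGroup E] [NormedSpace ℝ E]

noncomputable def Mmap (A B : E →L[ℝ] ℝ) : E →L[ℝ] (E →L[ℝ] ℝ) :=
  B.smulRight A + A.smulRight B

lemma Mmap_apply (A B : E →L[ℝ] ℝ) (θ ξ : E) :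
    Mmap A B θ ξ = B θ * A ξ + A θ * B ξ := by
  simp [Mmap, smul_eq_mul]

lemma hasFDerivAt_res (A B : E →L[ℝ] ℝ) (yn : ℝ) (x : E) :
    HasFDerivAt (fun θ => A θ * B θ - yn) (Mmap A B x) x := by
  have h := ((A.hasFDerivAt (x := x)).fun_mul (B.hasFDerivAt (x := x))).sub_const yn
  refine h.congr_fderiv ?_
  ext ξ; simp [Mmap, smul_eq_mul]; ring

lemma hasFDerivAt_res_sq (A B : E →L[ℝ] ℝ) (yn c : ℝ) (x : E) :
    HasFDerivAt (fun θ => c * (A θ * B θ - yn) ^ 2)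
      ((2 * c * (A x * B x - yn)) • (Mmap A B x)) x := by
  have h := (((hasFDerivAt_res A B yn x).fun_mul (hasFDerivAt_res A B yn x))).const_mul c
  have hsq : (fun θ => c * (A θ * B θ - yn) ^ 2)
      = fun θ => c * ((A θ * B θ - yn) * (A θ * B θ - yn)) := by
    funext θ; ring
  rw [hsq]
  refine h.congr_fderiv ?_
  ext ξ; simp [smul_eq_mul]; ring

lemma hasFDerivAt_Lgen {n : Type*} [Fintype n] (A : n → E →L[ℝ] ℝ) (B : E →L[ℝ] ℝ)
    (y : n → ℝ) (c : ℝ) (x : E) :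
    HasFDerivAt (fun θ => c * ∑ i, (A i θ * B θ - y i) ^ 2)
      (∑ i, (2 * c * (A i x * B x - y i)) • (Mmap (A i) B x)) x := by
  have h : HasFDerivAt (fun θ => ∑ i, c * (A i θ * B θ - y i) ^ 2)
      (∑ i, (2 * c * (A i x * B x - y i)) • (Mmap (A i) B x)) x :=
    HasFDerivAt.fun_sum (fun i _ => hasFDerivAt_res_sq (A i) B (y i) c x)
  have heq : (fun θ => c * ∑ i, (A i θ * B θ - y i) ^ 2)
      = fun θ => ∑ i, c * (A i θ * B θ - y i) ^ 2 := by
    funext θ; rw [Finset.mul_sum]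
  rw [heq]; exact h

lemma hasFDerivAt_Ggen {n : Type*} [Fintype n] (A : n → E →L[ℝ] ℝ) (B : E →L[ℝ] ℝ)
    (y : n → ℝ) (c : ℝ) (x : E) :
    HasFDerivAt (fun θ => ∑ i, (2 * c * (A i θ * B θ - y i)) • (Mmap (A i) B θ))
      (∑ i, ((2 * c * (A i x * B x - y i)) • (Mmap (A i) B)
        + ((2 * c) • (Mmap (A i) B x)).smulRight (Mmap (A i) B x))) x := by
  refine HasFDerivAt.fun_sum (fun i _ => ?_)
  have hc : HasFDerivAt (fun θ => 2 * c * (A i θ * B θ - y i))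
      ((2 * c) • (Mmap (A i) B x)) x := by
    have := (hasFDerivAt_res (A i) B (y i) x).const_mul (2 * c)
    convert this using 1
  exact hc.fun_smul ((Mmap (A i) B).hasFDerivAt)

lemma hessian_at_zero {n : Type*} [Fintype n] (A : n → E →L[ℝ] ℝ) (B : E →L[ℝ] ℝ)
    (y : n → ℝ) (c : ℝ) (x : E) (h0 : ∀ i, A i x * B x - y i = 0) (ξ : E) :
    fderiv ℝ (fderiv ℝ (fun θ => c * ∑ i, (A i θ * B θ - y i) ^ 2)) x ξ ξ
      = 2 * c * ∑ i, (B x * A i ξ + A i x * B ξ) ^ 2 := by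
  have hfd : fderiv ℝ (fun θ => c * ∑ i, (A i θ * B θ - y i) ^ 2)
      = fun z => ∑ i, (2 * c * (A i z * B z - y i)) • (Mmap (A i) B z) :=
    funext fun z => (hasFDerivAt_Lgen A B y c z).fderiv
  rw [hfd, (hasFDerivAt_Ggen A B y c x).fderiv]
  simp only [ContinuousLinearMap.sum_apply, ContinuousLinearMap.add_apply,
    ContinuousLinearMap.coe_smul', Pi.smul_apply, ContinuousLinearMap.smulRight_apply,
    smul_eq_mul, h0, mul_zero, zero_mul, zero_add, Finset.mul_sum]
  exact Finset.sum_congr rfl fun i _ => by rw [Mmap_apply]; ring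

lemma hasFDerivAt_sq_clm (W : E →L[ℝ] ℝ) (x : E) :
    HasFDerivAt (fun θ => (W θ) ^ 2) ((2 * W x) • (W : E →L[ℝ] ℝ)) x := by
  have h := (W.hasFDerivAt (x := x)).fun_mul (W.hasFDerivAt (x := x))
  have heq : (fun θ => (W θ) ^ 2) = fun θ => W θ * W θ := by funext θ; ring
  rw [heq]
  refine h.congr_fderiv ?_
  ext ξ; simp [smul_eq_mul]; ring

lemma hasFDerivAt_Cgen {n : Type*} [Fintype n] (W : n → E →L[ℝ] ℝ) (B : E →L[ℝ] ℝ) (x : E) :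
    HasFDerivAt (fun θ => (∑ i, (W i θ) ^ 2) - (B θ) ^ 2)
      ((∑ i, (2 * W i x) • (W i)) - (2 * B x) • B) x :=
  (HasFDerivAt.fun_sum (fun i _ => hasFDerivAt_sq_clm (W i) x)).fun_sub (hasFDerivAt_sq_clm B x)

end Aux

theorem two_layer_gradient_flow_sharpness_at_convergence
    (N dd r : ℕ) (hN : 0 < N) (hr : 0 < r)
    (X : Matrix (Fin N) (Fin dd) ℝ)
    (σ : Fin r → ℝ) (e : Fin r → Fin N → ℝ) (w : Fin r → Fin dd → ℝ)
    (dc : Fin r → ℝ) (y : Fin N → ℝ)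
    (hσpos : ∀ i, 0 < σ i)
    (hσdec : ∀ i j : Fin r, i ≤ j → σ j ≤ σ i)
    (he : ∀ i j : Fin r, ∑ n, e i n * e j n = if i = j then (1 : ℝ) else 0)
    (hw : ∀ i j : Fin r, ∑ m, w i m * w j m = if i = j then (1 : ℝ) else 0)
    (hX : ∀ n m, X n m = ∑ i, σ i * e i n * w i m)
    (hrank : X.rank = r)
    (hy : ∀ n, y n = ∑ i, dc i * e i n)
    (L : EuclideanSpace ℝ (Fin dd ⊕ Unit) → ℝ)
    (hL : ∀ θ, L θ = (1 / (2 * (N : ℝ))) *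
      ∑ n, ((∑ m, X n m * θ (Sum.inl m)) * θ (Sum.inr ()) - y n) ^ 2)
    (Q : ℝ) (hQ : Q = ∑ i, dc i ^ 2 / σ i ^ 2) (hQpos : 0 < Q)
    (C : EuclideanSpace ℝ (Fin dd ⊕ Unit) → ℝ)
    (hC : ∀ θ, C θ = (∑ i, (∑ m, w i m * θ (Sum.inl m)) ^ 2) - θ (Sum.inr ()) ^ 2)
    (θ : ℝ → EuclideanSpace ℝ (Fin dd ⊕ Unit))
    (hflow : ∀ t : ℝ, 0 ≤ t → HasDerivAt θ (-(gradient L (θ t))) t)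
    (θinf : EuclideanSpace ℝ (Fin dd ⊕ Unit))
    (hconv : Filter.Tendsto θ Filter.atTop (nhds θinf))
    (hzero : L θinf = 0) :
    θinf (Sum.inr ()) ^ 2 = (Real.sqrt (C (θ 0) ^ 2 + 4 * Q) - C (θ 0)) / 2 ∧
    (1 / (N : ℝ)) * (σ ⟨0, hr⟩ ^ 2 * θinf (Sum.inr ()) ^ 2
        + dc ⟨0, hr⟩ ^ 2 / θinf (Sum.inr ()) ^ 2) ≤ sharpness L θinf ∧
    sharpness L θinf ≤ (1 / (N : ℝ)) * (σ ⟨0, hr⟩ ^ 2 * θinf (Sum.inr ()) ^ 2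
        + (∑ i, dc i ^ 2) / θinf (Sum.inr ()) ^ 2) := by
  classical
  set A : Fin N → EuclideanSpace ℝ (Fin dd ⊕ Unit) →L[ℝ] ℝ :=
    fun n => ∑ m, X n m • EuclideanSpace.proj (Sum.inl m) with hAdef
  set B : EuclideanSpace ℝ (Fin dd ⊕ Unit) →L[ℝ] ℝ :=
    EuclideanSpace.proj (Sum.inr ()) with hBdef
  set W : Fin r → EuclideanSpace ℝ (Fin dd ⊕ Unit) →L[ℝ] ℝ :=
    fun i => ∑ m, w i m • EuclideanSpace.proj (Sum.inl m) with hWdef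
  set cc : ℝ := 1 / (2 * (N : ℝ)) with hccdef
  have hA : ∀ n (x : EuclideanSpace ℝ (Fin dd ⊕ Unit)),
      A n x = ∑ m, X n m * x (Sum.inl m) := by
    intro n x
    simp [hAdef, ContinuousLinearMap.sum_apply, PiLp.proj_apply]
  have hB : ∀ x : EuclideanSpace ℝ (Fin dd ⊕ Unit), B x = x (Sum.inr ()) := fun x => rfl
  have hWap : ∀ i (x : EuclideanSpace ℝ (Fin dd ⊕ Unit)),
      W i x = ∑ m, w i m * x (Sum.inl m) := by
    intro i x
    simp [hWdef, ContinuousLinearMap.sum_apply, PiLp.proj_apply]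
  have hLeq : L = fun x : EuclideanSpace ℝ (Fin dd ⊕ Unit) =>
      cc * ∑ n, (A n x * B x - y n) ^ 2 := by
    funext x
    rw [hL x]
    exact congrArg _ (Finset.sum_congr rfl fun n _ => by rw [hA, hB])
  have hCeq : C = fun x : EuclideanSpace ℝ (Fin dd ⊕ Unit) =>
      (∑ i, (W i x) ^ 2) - (B x) ^ 2 := by
    funext x
    rw [hC x]
    exact congrArg₂ _ (Finset.sum_congr rfl fun i _ => by rw [hWap]) rfl
  -- residuals vanish at the limit
  have hcpos : 0 < cc := by
    rw [hccdef]; positivity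
  have hres : ∀ n, A n θinf * B θinf - y n = 0 := by
    intro n
    rw [hLeq] at hzero
    have hsum : ∑ n, (A n θinf * B θinf - y n) ^ 2 = 0 := by
      rcases mul_eq_zero.1 hzero with h | h
      · exact absurd h (ne_of_gt hcpos)
      · exact h
    have h2 := (Finset.sum_eq_zero_iff_of_nonneg (fun i _ => sq_nonneg _)).1 hsum n (Finset.mem_univ n)
    exact pow_eq_zero_iff two_ne_zero |>.1 h2
  -- key algebraic identities from the SVD structure
  have hXw : ∀ (n : Fin N) (i : Fin r), (∑ m, X n m * w i m) = σ i * e i n := by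
    intro n i
    have h1 : ∀ m, X n m * w i m = ∑ j, (σ j * e j n) * (w j m * w i m) := by
      intro m
      rw [hX n m, Finset.sum_mul]
      exact Finset.sum_congr rfl fun j _ => by ring
    rw [Finset.sum_congr rfl fun m _ => h1 m, Finset.sum_comm]
    have h2 : ∀ j : Fin r, (∑ m, (σ j * e j n) * (w j m * w i m))
        = σ j * e j n * (if j = i then (1:ℝ) else 0) := by
      intro j
      rw [← Finset.mul_sum, hw j i]
    rw [Finset.sum_congr rfl fun j _ => h2 j]
    simp
  have hAx : ∀ (x : EuclideanSpace ℝ (Fin dd ⊕ Unit)) (n : Fin N),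
      A n x = ∑ i, σ i * e i n * (W i x) := by
    intro x n
    rw [hA n x]
    have h1 : ∀ m, X n m * x (Sum.inl m) = ∑ i, (σ i * e i n) * (w i m * x (Sum.inl m)) := by
      intro m
      rw [hX n m, Finset.sum_mul]
      exact Finset.sum_congr rfl fun j _ => by ring
    rw [Finset.sum_congr rfl fun m _ => h1 m, Finset.sum_comm]
    exact Finset.sum_congr rfl fun i _ => by rw [← Finset.mul_sum, hWap i x, mul_assoc]
  have hee : ∀ g : Fin r → ℝ, ∑ n, (∑ i, g i * e i n) ^ 2 = ∑ i, (g i) ^ 2 := by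
    intro g
    have h1 : ∀ n : Fin N, (∑ i, g i * e i n) ^ 2
        = ∑ i, ∑ j, (g i * g j) * (e i n * e j n) := by
      intro n
      rw [sq, Finset.sum_mul_sum]
      exact Finset.sum_congr rfl fun i _ => Finset.sum_congr rfl fun j _ => by ring
    rw [Finset.sum_congr rfl fun n _ => h1 n, Finset.sum_comm]
    refine Finset.sum_congr rfl fun i _ => ?_
    rw [Finset.sum_comm]
    have h2 : ∀ j : Fin r, (∑ n, (g i * g j) * (e i n * e j n))
        = g i * g j * (if i = j then (1:ℝ) else 0) := by
      intro j
      rw [← Finset.mul_sum, he i j]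
    rw [Finset.sum_congr rfl fun j _ => h2 j]
    simp [sq]
  -- diagonalized residuals: σ j * o j * v = dc j
  have hd : ∀ j : Fin r, σ j * (W j θinf) * (θinf (Sum.inr ())) = dc j := by
    have hg : ∀ n : Fin N,
        ∑ i, (σ i * (W i θinf) * (θinf (Sum.inr ())) - dc i) * e i n = 0 := by
      intro n
      have h1 := hres n
      rw [hAx θinf n, hB θinf, hy n] at h1
      have : (∑ i, σ i * e i n * W i θinf) * θinf (Sum.inr ())
          = ∑ i, (σ i * (W i θinf) * (θinf (Sum.inr ()))) * e i n := by
        rw [Finset.sum_mul]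
        exact Finset.sum_congr rfl fun i _ => by ring
      rw [this] at h1
      calc ∑ i, (σ i * (W i θinf) * (θinf (Sum.inr ())) - dc i) * e i n
          = (∑ i, (σ i * (W i θinf) * (θinf (Sum.inr ()))) * e i n)
            - ∑ i, dc i * e i n := by
            rw [← Finset.sum_sub_distrib]
            exact Finset.sum_congr rfl fun i _ => by ring
        _ = 0 := h1
    have hsq : ∑ i, (σ i * (W i θinf) * (θinf (Sum.inr ())) - dc i) ^ 2 = 0 := by
      rw [← hee fun i => σ i * (W i θinf) * (θinf (Sum.inr ())) - dc i]
      simp [hg]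
    intro j
    have := (Finset.sum_eq_zero_iff_of_nonneg (fun i _ => sq_nonneg _)).1 hsq j (Finset.mem_univ j)
    have := pow_eq_zero_iff two_ne_zero |>.1 this
    linarith
  -- the last coordinate of the limit is nonzero
  have hv : θinf (Sum.inr ()) ≠ 0 := by
    intro h0
    have : ∀ j : Fin r, dc j = 0 := by
      intro j
      have := hd j
      rw [h0] at this
      simpa using this.symm
    rw [hQ] at hQpos
    simp [this] at hQpos
  have hv2 : 0 < θinf (Sum.inr ()) ^ 2 := by positivity
  have ho : ∀ j : Fin r, W j θinf = dc j / (σ j * θinf (Sum.inr ())) := by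
    intro j
    have hσ := hσpos j
    field_simp
    linarith [hd j]
  -- the derivative of L
  have hDL : ∀ x, fderiv ℝ L x = ∑ n, (2 * cc * (A n x * B x - y n)) • (Mmap (A n) B x) := by
    intro x
    rw [hLeq]
    exact (hasFDerivAt_Lgen A B y cc x).fderiv
  -- orthogonality of the gradients of C and L
  have key : ∀ x : EuclideanSpace ℝ (Fin dd ⊕ Unit),
      ((∑ i, (2 * W i x) • (W i)) - (2 * B x) • B) (gradient L x) = 0 := by
    intro x
    set gc : EuclideanSpace ℝ (Fin dd ⊕ Unit) := (WithLp.equiv 2 _).symm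
        (fun k => Sum.elim (fun m => ∑ i, 2 * (W i x) * w i m)
          (fun _ => -(2 * B x)) k) with hgcdef
    have hgck : ∀ k, gc k = Sum.elim (fun m => ∑ i, 2 * (W i x) * w i m)
        (fun _ => -(2 * B x)) k := fun k => rfl
    have hpair : ((∑ i, (2 * W i x) • (W i)) - (2 * B x) • B) (gradient L x)
        = inner ℝ gc (gradient L x) := by
      rw [PiLp.inner_apply]
      simp only [RCLike.inner_apply', conj_trivial]
      rw [Fintype.sum_sum_type]
      simp only [hgck, Sum.elim_inl, Sum.elim_inr]
      simp only [ContinuousLinearMap.sub_apply, ContinuousLinearMap.sum_apply,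
        ContinuousLinearMap.coe_smul', Pi.smul_apply, smul_eq_mul, hWap, hB,
        Finset.univ_unique]
      have hswap : ∀ (o : Fin r → ℝ) (g1 : Fin dd → ℝ),
          ∑ i, o i * ∑ m, w i m * g1 m = ∑ m, (∑ i, o i * w i m) * g1 m := by
        intro o g1
        calc ∑ i, o i * ∑ m, w i m * g1 m = ∑ i, ∑ m, o i * (w i m * g1 m) :=
              Finset.sum_congr rfl fun i _ => Finset.mul_sum _ _ _
          _ = ∑ m, ∑ i, o i * (w i m * g1 m) := Finset.sum_comm
          _ = ∑ m, (∑ i, o i * w i m) * g1 m := Finset.sum_congr rfl fun m _ => by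
              rw [Finset.sum_mul]; exact Finset.sum_congr rfl fun i _ => by ring
      rw [← hswap (fun i => 2 * ∑ m, w i m * x (Sum.inl m))
        (fun m => gradient L x (Sum.inl m))]
      simp [Finset.sum_sub_distrib]
      ring
    have hinner : (inner ℝ gc (gradient L x) : ℝ) = (fderiv ℝ L x) gc := by
      rw [real_inner_comm]
      exact InnerProductSpace.toDual_symm_apply
    rw [hpair, hinner, hDL x]
    simp only [ContinuousLinearMap.sum_apply, ContinuousLinearMap.coe_smul',
      Pi.smul_apply, smul_eq_mul]
    refine Finset.sum_eq_zero fun n _ => ?_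
    have hAgc : A n gc = ∑ i, 2 * (W i x) * (σ i * e i n) := by
      rw [hA n gc]
      have h0 : ∀ m, X n m * gc (Sum.inl m) = X n m * ∑ i, 2 * (W i x) * w i m :=
        fun m => by rw [hgck]; simp
      rw [Finset.sum_congr rfl fun m _ => h0 m]
      calc ∑ m, X n m * ∑ i, 2 * W i x * w i m
          = ∑ m, ∑ i, (2 * W i x) * (X n m * w i m) := Finset.sum_congr rfl fun m _ => by
            rw [Finset.mul_sum]; exact Finset.sum_congr rfl fun i _ => by ring
        _ = ∑ i, ∑ m, (2 * W i x) * (X n m * w i m) := Finset.sum_comm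
        _ = ∑ i, 2 * W i x * (σ i * e i n) := Finset.sum_congr rfl fun i _ => by
            rw [← Finset.mul_sum, hXw n i]
    have hBgc : B gc = -(2 * B x) := by rw [hB, hgck]; simp
    rw [Mmap_apply, hAgc, hBgc, hAx x n]
    have hbr : B x * (∑ i, 2 * W i x * (σ i * e i n))
        + (∑ i, σ i * e i n * W i x) * -(2 * B x) = 0 := by
      rw [Finset.mul_sum, Finset.sum_mul, ← Finset.sum_add_distrib]
      exact Finset.sum_eq_zero fun i _ => by ring
    rw [hbr, mul_zero]
  -- C is conserved along the flow
  have hCfd : ∀ x : EuclideanSpace ℝ (Fin dd ⊕ Unit),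
      HasFDerivAt C ((∑ i, (2 * W i x) • (W i)) - (2 * B x) • B) x := by
    intro x
    rw [hCeq]
    exact hasFDerivAt_Cgen W B x
  have hφ : ∀ t : ℝ, 0 ≤ t → HasDerivAt (fun s => C (θ s)) 0 t := by
    intro t ht
    have h := (hCfd (θ t)).comp_hasDerivAt t (hflow t ht)
    rw [show (((∑ i, (2 * W i (θ t)) • (W i)) - (2 * B (θ t)) • B) (-(gradient L (θ t))))
        = 0 by rw [map_neg, key (θ t), neg_zero]] at h
    exact h
  have hconst : ∀ t : ℝ, 0 ≤ t → C (θ t) = C (θ 0) := by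
    intro t ht
    exact constant_of_has_deriv_right_zero
      (fun s hs => ((hφ s hs.1).continuousAt.continuousWithinAt))
      (fun s hs => (hφ s hs.1).hasDerivWithinAt) t ⟨ht, le_rfl⟩
  have hCcont : Continuous C := by
    rw [hCeq]
    exact Continuous.sub (continuous_finset_sum _ fun i _ => ((W i).continuous.pow 2))
      (B.continuous.pow 2)
  have hClim : C θinf = C (θ 0) := by
    have h1 : Filter.Tendsto (fun t => C (θ t)) Filter.atTop (nhds (C θinf)) :=
      (hCcont.tendsto θinf).comp hconv
    have h2 : (fun t => C (θ t)) =ᶠ[Filter.atTop] (fun _ => C (θ 0)) :=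
      Filter.eventually_atTop.2 ⟨0, fun t ht => hconst t ht⟩
    exact tendsto_nhds_unique (h1.congr' h2) tendsto_const_nhds
  -- the value of C at the limit
  have hCinf : C θinf = Q / θinf (Sum.inr ()) ^ 2 - θinf (Sum.inr ()) ^ 2 := by
    rw [hCeq]
    simp only
    rw [hB]
    congr 1
    have h1 : ∀ i : Fin r, (W i θinf) ^ 2 = (dc i ^ 2 / σ i ^ 2) / θinf (Sum.inr ()) ^ 2 := by
      intro i
      rw [ho i, div_pow, mul_pow, div_div]
    rw [Finset.sum_congr rfl fun i _ => h1 i, ← Finset.sum_div, ← hQ]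
  have hC0 : C (θ 0) = Q / θinf (Sum.inr ()) ^ 2 - θinf (Sum.inr ()) ^ 2 := by
    rw [← hClim]; exact hCinf
  have conj1 : θinf (Sum.inr ()) ^ 2 = (Real.sqrt (C (θ 0) ^ 2 + 4 * Q) - C (θ 0)) / 2 := by
    have h1 : C (θ 0) ^ 2 + 4 * Q
        = (Q / θinf (Sum.inr ()) ^ 2 + θinf (Sum.inr ()) ^ 2) ^ 2 := by
      rw [hC0]
      field_simp
      ring
    have h2 : Real.sqrt (C (θ 0) ^ 2 + 4 * Q)
        = Q / θinf (Sum.inr ()) ^ 2 + θinf (Sum.inr ()) ^ 2 := by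
      rw [h1]
      exact Real.sqrt_sq (by positivity)
    rw [h2, hC0]
    ring
  -- the Hessian quadratic form at the limit
  have hNne : (N : ℝ) ≠ 0 := Nat.cast_ne_zero.2 hN.ne'
  have hHess : ∀ ξ : EuclideanSpace ℝ (Fin dd ⊕ Unit),
      fderiv ℝ (fderiv ℝ L) θinf ξ ξ
      = (1 / (N : ℝ)) * ∑ i, (σ i * θinf (Sum.inr ()) * (W i ξ)
          + dc i * (B ξ) / θinf (Sum.inr ())) ^ 2 := by
    intro ξ
    rw [hLeq, hessian_at_zero A B y cc θinf hres ξ]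
    have h2c : 2 * cc = 1 / (N : ℝ) := by rw [hccdef]; field_simp
    rw [h2c]
    congr 1
    have hterm : ∀ n : Fin N, B θinf * A n ξ + A n θinf * B ξ
        = ∑ i, (σ i * θinf (Sum.inr ()) * (W i ξ)
            + dc i * B ξ / θinf (Sum.inr ())) * e i n := by
      intro n
      rw [hAx ξ n, hAx θinf n, hB θinf]
      rw [Finset.mul_sum, Finset.sum_mul, ← Finset.sum_add_distrib]
      refine Finset.sum_congr rfl fun i _ => ?_
      rw [ho i]
      have hσ := (hσpos i).ne'
      field_simp
    rw [Finset.sum_congr rfl fun n _ => by rw [hterm n]]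
    exact hee _
  -- Bessel inequality for the orthonormal rows w
  have hww : ∀ g : Fin r → ℝ, ∑ m, (∑ i, g i * w i m) ^ 2 = ∑ i, (g i) ^ 2 := by
    intro g
    have h1 : ∀ m : Fin dd, (∑ i, g i * w i m) ^ 2
        = ∑ i, ∑ j, (g i * g j) * (w i m * w j m) := by
      intro m
      rw [sq, Finset.sum_mul_sum]
      exact Finset.sum_congr rfl fun i _ => Finset.sum_congr rfl fun j _ => by ring
    rw [Finset.sum_congr rfl fun m _ => h1 m, Finset.sum_comm]
    refine Finset.sum_congr rfl fun i _ => ?_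
    rw [Finset.sum_comm]
    have h2 : ∀ j : Fin r, (∑ m, (g i * g j) * (w i m * w j m))
        = g i * g j * (if i = j then (1:ℝ) else 0) := by
      intro j
      rw [← Finset.mul_sum, hw i j]
    rw [Finset.sum_congr rfl fun j _ => h2 j]
    simp [sq]
  have hBessel : ∀ ξ : EuclideanSpace ℝ (Fin dd ⊕ Unit),
      ∑ i, (W i ξ) ^ 2 ≤ ∑ m, ξ (Sum.inl m) ^ 2 := by
    intro ξ
    set a : Fin r → ℝ := fun i => W i ξ with hadef
    set sm : Fin dd → ℝ := fun m => ∑ i, a i * w i m with hsmdef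
    have hxs : ∑ m, ξ (Sum.inl m) * sm m = ∑ i, a i ^ 2 := by
      have h1 : ∀ m, ξ (Sum.inl m) * sm m = ∑ i, a i * (w i m * ξ (Sum.inl m)) := by
        intro m
        rw [hsmdef]
        simp only
        rw [Finset.mul_sum]
        exact Finset.sum_congr rfl fun i _ => by ring
      rw [Finset.sum_congr rfl fun m _ => h1 m, Finset.sum_comm]
      refine Finset.sum_congr rfl fun i _ => ?_
      rw [← Finset.mul_sum]
      have : ∑ m, w i m * ξ (Sum.inl m) = a i := (hWap i ξ).symm
      rw [this, sq]
    have hss : ∑ m, sm m ^ 2 = ∑ i, a i ^ 2 := hww a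
    have h0 : (0:ℝ) ≤ ∑ m, (ξ (Sum.inl m) - sm m) ^ 2 :=
      Finset.sum_nonneg fun m _ => sq_nonneg _
    have hexp : ∑ m, (ξ (Sum.inl m) - sm m) ^ 2
        = (∑ m, ξ (Sum.inl m) ^ 2) - 2 * (∑ m, ξ (Sum.inl m) * sm m)
          + ∑ m, sm m ^ 2 := by
      have hpt : ∀ m : Fin dd, (ξ (Sum.inl m) - sm m) ^ 2
          = ξ (Sum.inl m) ^ 2 - 2 * (ξ (Sum.inl m) * sm m) + sm m ^ 2 := fun m => by ring
      rw [Finset.sum_congr rfl fun m _ => hpt m, Finset.sum_add_distrib,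
        Finset.sum_sub_distrib, Finset.mul_sum]
    rw [hexp, hxs, hss] at h0
    linarith
  -- unit norm in coordinates
  have hnorm1 : ∀ ξ : EuclideanSpace ℝ (Fin dd ⊕ Unit), ‖ξ‖ = 1 →
      (∑ m, ξ (Sum.inl m) ^ 2) + ξ (Sum.inr ()) ^ 2 = 1 := by
    intro ξ hξ
    rw [EuclideanSpace.norm_eq] at hξ
    have h2 := Real.sqrt_eq_one.1 hξ
    rw [Fintype.sum_sum_type] at h2
    simpa [Real.norm_eq_abs, sq_abs] using h2
  -- notation for the top singular value etc.
  have hσ1pos : 0 < σ ⟨0, hr⟩ := hσpos _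
  have hσ1top : ∀ i : Fin r, σ i ≤ σ ⟨0, hr⟩ := fun i => hσdec ⟨0, hr⟩ i (by
    simp [Fin.le_def])
  have hDnn : (0:ℝ) ≤ ∑ i, dc i ^ 2 := Finset.sum_nonneg fun i _ => sq_nonneg _
  -- upper bound for the quadratic form on the unit sphere
  have hub : ∀ ξ : EuclideanSpace ℝ (Fin dd ⊕ Unit), ‖ξ‖ = 1 →
      fderiv ℝ (fderiv ℝ L) θinf ξ ξ ≤ (1 / (N : ℝ)) * (σ ⟨0, hr⟩ ^ 2 * θinf (Sum.inr ()) ^ 2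
        + (∑ i, dc i ^ 2) / θinf (Sum.inr ()) ^ 2) := by
    intro ξ hξ
    rw [hHess ξ]
    set v : ℝ := θinf (Sum.inr ()) with hvdef
    set σ1 : ℝ := σ ⟨0, hr⟩ with hσ1def
    set b : ℝ := B ξ with hbdef
    set D : ℝ := ∑ i, dc i ^ 2 with hDdef
    set A2 : ℝ := ∑ i, (W i ξ) ^ 2 with hA2def
    set T : ℝ := ∑ i, (σ i * W i ξ) * dc i with hTdef
    set S2a : ℝ := ∑ i, (σ i * W i ξ) ^ 2 with hS2adef
    have hA2nn : 0 ≤ A2 := by rw [hA2def]; exact Finset.sum_nonneg fun i _ => sq_nonneg _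
    have hexp : ∑ i, (σ i * v * (W i ξ) + dc i * b / v) ^ 2
        = v ^ 2 * S2a + 2 * T * b + D * (b ^ 2 / v ^ 2) := by
      have hpt : ∀ i : Fin r, (σ i * v * (W i ξ) + dc i * b / v) ^ 2
          = v ^ 2 * ((σ i * W i ξ) ^ 2) + (2 * b) * ((σ i * W i ξ) * dc i)
            + (b ^ 2 / v ^ 2) * (dc i ^ 2) := by
        intro i
        field_simp
        ring
      rw [Finset.sum_congr rfl fun i _ => hpt i, Finset.sum_add_distrib,
        Finset.sum_add_distrib, ← Finset.mul_sum, ← Finset.mul_sum, ← Finset.mul_sum,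
        hS2adef, hTdef, hDdef]
      ring
    have hS2a : S2a ≤ σ1 ^ 2 * A2 := by
      rw [hS2adef, hA2def, Finset.mul_sum]
      refine Finset.sum_le_sum fun i _ => ?_
      have h1 : (σ i * W i ξ) ^ 2 = σ i ^ 2 * (W i ξ) ^ 2 := by ring
      rw [h1]
      exact mul_le_mul_of_nonneg_right
        (pow_le_pow_left₀ (hσpos i).le (hσ1top i) 2) (sq_nonneg _)
    have hT2 : T ^ 2 ≤ S2a * D := by
      rw [hTdef, hS2adef, hDdef]
      exact Finset.sum_mul_sq_le_sq_mul_sq _ _ _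
    have hc1 : 0 < σ1 ^ 2 * v ^ 2 := mul_pos (pow_pos hσ1pos 2) hv2
    have h2Tb : 2 * T * b ≤ T ^ 2 / (σ1 ^ 2 * v ^ 2) + (σ1 ^ 2 * v ^ 2) * b ^ 2 := by
      rw [← sub_nonneg]
      have heq : T ^ 2 / (σ1 ^ 2 * v ^ 2) + (σ1 ^ 2 * v ^ 2) * b ^ 2 - 2 * T * b
          = (T - (σ1 ^ 2 * v ^ 2) * b) ^ 2 / (σ1 ^ 2 * v ^ 2) := by
        field_simp
        ring
      rw [heq]
      positivity
    have hT2d : T ^ 2 / (σ1 ^ 2 * v ^ 2) ≤ D * A2 / v ^ 2 := by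
      have h1 : T ^ 2 ≤ σ1 ^ 2 * A2 * D :=
        hT2.trans (by
          calc S2a * D ≤ (σ1 ^ 2 * A2) * D := mul_le_mul_of_nonneg_right hS2a hDnn
            _ = σ1 ^ 2 * A2 * D := rfl)
      have h2 : T ^ 2 / (σ1 ^ 2 * v ^ 2) ≤ (σ1 ^ 2 * A2 * D) / (σ1 ^ 2 * v ^ 2) := by
        gcongr
      have h3 : (σ1 ^ 2 * A2 * D) / (σ1 ^ 2 * v ^ 2) = D * A2 / v ^ 2 := by
        field_simp
      rw [h3] at h2
      exact h2
    have hfinal : v ^ 2 * S2a + 2 * T * b + D * (b ^ 2 / v ^ 2)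
        ≤ (σ1 ^ 2 * v ^ 2 + D / v ^ 2) * (A2 + b ^ 2) := by
      have h4 : v ^ 2 * S2a ≤ v ^ 2 * (σ1 ^ 2 * A2) :=
        mul_le_mul_of_nonneg_left hS2a (sq_nonneg v)
      have h5 : (σ1 ^ 2 * v ^ 2 + D / v ^ 2) * (A2 + b ^ 2)
          = v ^ 2 * (σ1 ^ 2 * A2) + (D * A2 / v ^ 2 + σ1 ^ 2 * v ^ 2 * b ^ 2)
            + D * (b ^ 2 / v ^ 2) := by
        field_simp
        ring
      rw [h5]
      linarith
    have hball : A2 + b ^ 2 ≤ 1 := by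
      have hbes := hBessel ξ
      have hn := hnorm1 ξ hξ
      have hbb : b = ξ (Sum.inr ()) := by rw [hbdef, hB]
      rw [hA2def, hbb]
      linarith
    have hsum_le : ∑ i, (σ i * v * (W i ξ) + dc i * b / v) ^ 2
        ≤ σ1 ^ 2 * v ^ 2 + D / v ^ 2 := by
      rw [hexp]
      calc v ^ 2 * S2a + 2 * T * b + D * (b ^ 2 / v ^ 2)
          ≤ (σ1 ^ 2 * v ^ 2 + D / v ^ 2) * (A2 + b ^ 2) := hfinal
        _ ≤ (σ1 ^ 2 * v ^ 2 + D / v ^ 2) * 1 := by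
            refine mul_le_mul_of_nonneg_left hball ?_
            positivity
        _ = σ1 ^ 2 * v ^ 2 + D / v ^ 2 := mul_one _
    exact mul_le_mul_of_nonneg_left hsum_le (by positivity)
  -- a unit vector witnessing the lower bound
  obtain ⟨ξ0, hξ0norm, hξ0val⟩ : ∃ ξ0 : EuclideanSpace ℝ (Fin dd ⊕ Unit), ‖ξ0‖ = 1 ∧
      (1 / (N : ℝ)) * (σ ⟨0, hr⟩ ^ 2 * θinf (Sum.inr ()) ^ 2
        + dc ⟨0, hr⟩ ^ 2 / θinf (Sum.inr ()) ^ 2)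
        ≤ fderiv ℝ (fderiv ℝ L) θinf ξ0 ξ0 := by
    set v : ℝ := θinf (Sum.inr ()) with hvdef
    set σ1 : ℝ := σ ⟨0, hr⟩ with hσ1def
    set d1 : ℝ := dc ⟨0, hr⟩ with hd1def
    set S : ℝ := σ1 ^ 2 * v ^ 2 + d1 ^ 2 / v ^ 2 with hSdef
    have hSpos : 0 < S := by
      rw [hSdef]
      have h1 : 0 < σ1 ^ 2 * v ^ 2 := mul_pos (pow_pos hσ1pos 2) hv2
      have h2 : 0 ≤ d1 ^ 2 / v ^ 2 := div_nonneg (sq_nonneg _) (sq_nonneg _)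
      linarith
    set Z : ℝ := Real.sqrt S with hZdef
    have hZpos : 0 < Z := Real.sqrt_pos.2 hSpos
    have hZ2 : Z ^ 2 = S := Real.sq_sqrt hSpos.le
    set α : ℝ := σ1 * v / Z with hαdef
    set β : ℝ := d1 / (v * Z) with hβdef
    set ξ0 : EuclideanSpace ℝ (Fin dd ⊕ Unit) := (WithLp.equiv 2 _).symm
        (fun k => Sum.elim (fun m => α * w ⟨0, hr⟩ m) (fun _ => β) k) with hξ0def
    have hξ0k : ∀ k, ξ0 k = Sum.elim (fun m => α * w ⟨0, hr⟩ m) (fun _ => β) k :=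
      fun k => rfl
    have hαβ : α ^ 2 + β ^ 2 = 1 := by
      have h1 : α ^ 2 + β ^ 2 = (σ1 ^ 2 * v ^ 2 + d1 ^ 2 / v ^ 2) / Z ^ 2 := by
        rw [hαdef, hβdef]
        field_simp
      rw [h1, ← hSdef, ← hZ2]
      exact div_self (by positivity)
    have hnorm : ‖ξ0‖ = 1 := by
      rw [EuclideanSpace.norm_eq]
      have hsum : ∑ k : Fin dd ⊕ Unit, ‖ξ0 k‖ ^ 2 = 1 := by
        rw [Fintype.sum_sum_type]
        simp only [hξ0k, Sum.elim_inl, Sum.elim_inr, Real.norm_eq_abs, sq_abs]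
        have hl : ∑ m, (α * w ⟨0, hr⟩ m) ^ 2 = α ^ 2 := by
          have hpt : ∀ m : Fin dd, (α * w ⟨0, hr⟩ m) ^ 2
              = α ^ 2 * (w ⟨0, hr⟩ m * w ⟨0, hr⟩ m) := fun m => by ring
          rw [Finset.sum_congr rfl fun m _ => hpt m, ← Finset.mul_sum, hw, if_pos rfl,
            mul_one]
        rw [hl]
        simpa using hαβ
      rw [hsum, Real.sqrt_one]
    have hWξ0 : ∀ i : Fin r, W i ξ0 = α * (if i = ⟨0, hr⟩ then 1 else 0) := by
      intro i
      rw [hWap]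
      have hpt : ∀ m : Fin dd, w i m * ξ0 (Sum.inl m) = α * (w i m * w ⟨0, hr⟩ m) := by
        intro m
        rw [hξ0k]
        simp only [Sum.elim_inl]
        ring
      rw [Finset.sum_congr rfl fun m _ => hpt m, ← Finset.mul_sum, hw]
    have hBξ0 : B ξ0 = β := rfl
    refine ⟨ξ0, hnorm, ?_⟩
    rw [hHess ξ0, hBξ0]
    have h0 : σ ⟨0, hr⟩ * v * (W ⟨0, hr⟩ ξ0) + dc ⟨0, hr⟩ * β / v = Z := by
      rw [hWξ0, if_pos rfl, mul_one, hαdef, hβdef]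
      have h1 : σ1 * v * (σ1 * v / Z) + d1 * (d1 / (v * Z)) / v = S / Z := by
        rw [hSdef]
        field_simp
      rw [h1, ← hZ2, sq, mul_div_assoc, div_self hZpos.ne', mul_one]
    have hge : S ≤ ∑ i, (σ i * v * (W i ξ0) + dc i * β / v) ^ 2 := by
      have hmem := Finset.single_le_sum
        (f := fun i => (σ i * v * (W i ξ0) + dc i * β / v) ^ 2)
        (fun i _ => sq_nonneg _) (Finset.mem_univ ⟨0, hr⟩)
      have hmem' : (σ ⟨0, hr⟩ * v * (W ⟨0, hr⟩ ξ0) + dc ⟨0, hr⟩ * β / v) ^ 2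
          ≤ ∑ i, (σ i * v * (W i ξ0) + dc i * β / v) ^ 2 := hmem
      rw [h0, hZ2] at hmem'
      exact hmem' 
    exact mul_le_mul_of_nonneg_left hge (by positivity)
  -- conclusion via the supremum
  have hbdd : BddAbove {c : ℝ | ∃ ξ : EuclideanSpace ℝ (Fin dd ⊕ Unit),
      ‖ξ‖ = 1 ∧ fderiv ℝ (fderiv ℝ L) θinf ξ ξ = c} := by
    refine ⟨(1 / (N : ℝ)) * (σ ⟨0, hr⟩ ^ 2 * θinf (Sum.inr ()) ^ 2
      + (∑ i, dc i ^ 2) / θinf (Sum.inr ()) ^ 2), ?_⟩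
    rintro c ⟨ξ, h1, rfl⟩
    exact hub ξ h1
  have hmemS : fderiv ℝ (fderiv ℝ L) θinf ξ0 ξ0 ∈ {c : ℝ | ∃ ξ : EuclideanSpace ℝ (Fin dd ⊕ Unit),
      ‖ξ‖ = 1 ∧ fderiv ℝ (fderiv ℝ L) θinf ξ ξ = c} := ⟨ξ0, hξ0norm, rfl⟩
  refine ⟨conj1, ?_, ?_⟩
  · exact le_trans hξ0val (le_csSup hbdd hmemS)
  · refine csSup_le ⟨_, hmemS⟩ ?_
    rintro c ⟨ξ, h1, rfl⟩
    exact hub ξ h1
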